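/- Let v_0,...,v_n ∈ ℝ^{n+1} be vectors spanning a hyperplane H with v_0 + ... + v_n = 0 such that any n of them are linearly independent. Then H is the union of the n+1 simplicial cones generated by the subsets {v_0,...,v_n} \ {v_i}, i = 0,...,n, and these cones have pairwise disjoint interiors relative to H. -/

import Mathlib

open Filter Topology


/-- The cone of nonnegative combinations of the vectors `v_j`, `j ≠ i`. -/
def coneGen {n : ℕ} (v : Fin (n + 1) → (Fin (n + 1) → ℝ)) (i : Fin (n + 1)) :
    Set (Fin (n + 1) → ℝ) :=
  {y | ∃ c : Fin (n + 1) → ℝ, (∀ j, 0 ≤ c j) ∧ c i = 0 ∧ y = ∑ j, c j • v j}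

lemma evA {E : Type*} [NormedAddCommGroup E] [NormedSpace ℝ E]
    {S : Set E} {x h : E} (hx : x ∈ intrinsicInterior ℝ S)
    (hh : h ∈ vectorSpan ℝ S) : ∀ᶠ t : ℝ in 𝓝 0, x + t • h ∈ S := by
  obtain ⟨y, hy, rfl⟩ := (mem_intrinsicInterior).1 hx
  have hmem : ∀ t : ℝ, (↑y : E) + t • h ∈ affineSpan ℝ S := by
    intro t
    have : (t • h) +ᵥ (↑y : E) ∈ affineSpan ℝ S :=
      AffineSubspace.vadd_mem_of_mem_direction
        (by rw [direction_affineSpan]; exact Submodule.smul_mem _ _ hh) y.2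
    simpa [add_comm] using this
  set f : ℝ → affineSpan ℝ S := fun t => ⟨(↑y : E) + t • h, hmem t⟩ with hf
  have hcont : Continuous f := by
    apply Continuous.subtype_mk
    continuity
  have hf0 : f 0 = y := by simp [hf]
  have hev : ∀ᶠ t in 𝓝 0, f t ∈ interior ((Subtype.val) ⁻¹' S : Set (affineSpan ℝ S)) := by
    have hca := hcont.continuousAt (x := 0)
    exact hca.eventually_mem (isOpen_interior.mem_nhds (hf0 ▸ hy))
  refine hev.mono fun t ht => ?_
  have : f t ∈ (Subtype.val ⁻¹' S : Set (affineSpan ℝ S)) := interior_subset ht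
  simpa [hf] using this

-- intersection of two cones lies in the face spanned by the others
lemma inter_cone_subset {n : ℕ} {v : Fin (n + 1) → (Fin (n + 1) → ℝ)}
    (hsum : ∑ j, v j = 0)
    (hind : ∀ i : Fin (n + 1),
      LinearIndependent ℝ (fun j : {j : Fin (n + 1) // j ≠ i} => v j))
    {i j : Fin (n + 1)} (hij : i ≠ j) :
    coneGen v i ∩ coneGen v j ⊆
      (Submodule.span ℝ (v '' {k | k ≠ i ∧ k ≠ j}) : Set (Fin (n + 1) → ℝ)) := by
  rintro x ⟨⟨a, ha0, hai, hax⟩, ⟨b, hb0, hbj, hbx⟩⟩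
  set b' : Fin (n + 1) → ℝ := fun k => b k - b i with hb'
  have hb'x : ∑ k, b' k • v k = x := by
    have : ∑ k, b' k • v k = (∑ k, b k • v k) - b i • (∑ k, v k) := by
      rw [Finset.smul_sum, ← Finset.sum_sub_distrib]
      exact Finset.sum_congr rfl fun k _ => by rw [hb', sub_smul]
    rw [this, hsum, smul_zero, sub_zero, hbx]
  have hkey : ∀ k : Fin (n + 1), k ≠ i → a k = b' k := by
    have hzero : ∑ k : {k : Fin (n+1) // k ≠ i}, (a ↑k - b' ↑k) • v ↑k = 0 := by
      have h1 : ∑ k ∈ Finset.univ.erase i, (a k - b' k) • v k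
          = ∑ k : {k : Fin (n+1) // k ≠ i}, (a ↑k - b' ↑k) • v ↑k :=
        Finset.sum_subtype _ (by simp) _
      have h2 : ∑ k, (a k - b' k) • v k = 0 := by
        have : ∑ k, (a k - b' k) • v k = (∑ k, a k • v k) - ∑ k, b' k • v k := by
          rw [← Finset.sum_sub_distrib]
          exact Finset.sum_congr rfl fun k _ => by rw [sub_smul]
        rw [this, ← hax, hb'x, sub_self]
      rw [← h1]
      have h3 : ∑ k ∈ Finset.univ.erase i, (a k - b' k) • v k
          = (∑ k, (a k - b' k) • v k) - (a i - b' i) • v i := by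
        rw [← Finset.sum_erase_add Finset.univ _ (Finset.mem_univ i)]; ring_nf
      rw [h3, h2, hai, hb']
      simp
    have := (Fintype.linearIndependent_iff.1 (hind i)) _ hzero
    intro k hk
    have := this ⟨k, hk⟩
    linarith [this]
  have haj : a j = 0 := by
    have h1 := hkey j (Ne.symm hij)
    have h2 : b' j = - b i := by rw [hb']; simp [hbj]
    have := ha0 j
    have := hb0 i
    linarith
  rw [hax]
  refine Submodule.sum_mem _ fun k _ => ?_
  by_cases hki : k = i
  · rw [hki, hai, zero_smul]; exact Submodule.zero_mem _
  by_cases hkj : k = j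
  · rw [hkj, haj, zero_smul]; exact Submodule.zero_mem _
  exact Submodule.smul_mem _ _ (Submodule.subset_span ⟨k, ⟨hki, hkj⟩, rfl⟩)

lemma span_le_vectorSpan {n : ℕ} {v : Fin (n + 1) → (Fin (n + 1) → ℝ)}
    (hsum : ∑ j, v j = 0) (i : Fin (n + 1)) :
    Submodule.span ℝ (Set.range v) ≤ vectorSpan ℝ (coneGen v i) := by
  have h0 : (0 : Fin (n+1) → ℝ) ∈ coneGen v i :=
    ⟨0, fun _ => le_refl _, rfl, by simp⟩
  have hmem : ∀ k, k ≠ i → v k ∈ coneGen v i := by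
    intro k hk
    refine ⟨fun m => if m = k then 1 else 0, fun m => by positivity, by
      simp [Ne.symm hk], ?_⟩
    simp [ite_smul]
  have hvk : ∀ k, k ≠ i → v k ∈ vectorSpan ℝ (coneGen v i) := fun k hk => by
    have := vsub_mem_vectorSpan ℝ (hmem k hk) h0
    simpa using this
  have hv : ∀ k, v k ∈ vectorSpan ℝ (coneGen v i) := by
    intro k
    by_cases hk : k = i
    · subst hk
      have heq : v k = - ∑ m ∈ Finset.univ.erase k, v m := by
        have h := hsum
        rw [← Finset.sum_erase_add Finset.univ _ (Finset.mem_univ k)] at h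
        exact eq_neg_of_add_eq_zero_right h
      rw [heq]
      exact Submodule.neg_mem _ (Submodule.sum_mem _ fun m hm =>
        hvk m (Finset.ne_of_mem_erase hm))
    · exact hvk k hk
  rw [Submodule.span_le]
  rintro _ ⟨k, rfl⟩
  exact hv k

/-- Let `v_0, …, v_n ∈ ℝ^{n+1}` with `v_0 + ⋯ + v_n = 0` be such that any `n`
of them are linearly independent, and let `H` be their linear span (a
hyperplane). Then `H` is the union of the `n+1` simplicial cones generated by
the subsets `{v_0,…,v_n} \ {v_i}`, and these cones have pairwise disjoint
interiors relative to `H`. -/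
theorem span_eq_union_simplicial_cones (n : ℕ)
    (v : Fin (n + 1) → (Fin (n + 1) → ℝ))
    (hsum : ∑ j, v j = 0)
    (hind : ∀ i : Fin (n + 1),
      LinearIndependent ℝ (fun j : {j : Fin (n + 1) // j ≠ i} => v j)) :
    (⋃ i : Fin (n + 1), coneGen v i)
        = (Submodule.span ℝ (Set.range v) : Submodule ℝ (Fin (n + 1) → ℝ)) ∧
    Pairwise (fun i j : Fin (n + 1) =>
      Disjoint (intrinsicInterior ℝ (coneGen v i)) (intrinsicInterior ℝ (coneGen v j))) := by
  constructor
  · ext x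
    simp only [Set.mem_iUnion, SetLike.mem_coe]
    constructor
    · rintro ⟨i, c, hc0, hci, rfl⟩
      exact Submodule.sum_mem _ fun k _ =>
        Submodule.smul_mem _ _ (Submodule.subset_span ⟨k, rfl⟩)
    · intro hx
      obtain ⟨c, hc⟩ := (Submodule.mem_span_range_iff_exists_fun ℝ).1 hx
      obtain ⟨i0, -, hmin⟩ := Finset.exists_min_image Finset.univ c ⟨0, Finset.mem_univ 0⟩
      refine ⟨i0, fun k => c k - c i0,
        fun k => sub_nonneg.2 (hmin k (Finset.mem_univ k)), sub_self _, ?_⟩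
      have : ∑ k, (c k - c i0) • v k = (∑ k, c k • v k) - c i0 • (∑ k, v k) := by
        rw [Finset.smul_sum, ← Finset.sum_sub_distrib]
        exact Finset.sum_congr rfl fun k _ => by rw [sub_smul]
      rw [this, hsum, smul_zero, sub_zero, hc]
  · intro i j hij
    rw [Set.disjoint_left]
    intro x hxi hxj
    exfalso
    set W := Submodule.span ℝ (v '' {k | k ≠ i ∧ k ≠ j}) with hW
    have hsubW := inter_cone_subset hsum hind hij
    have hxW : x ∈ W := hsubW ⟨intrinsicInterior_subset hxi, intrinsicInterior_subset hxj⟩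
    have hHW : ∀ h ∈ Submodule.span ℝ (Set.range v), h ∈ W := by
      intro h hh
      have h1 : ∀ᶠ t : ℝ in nhds 0, x + t • h ∈ coneGen v i :=
        evA hxi (span_le_vectorSpan hsum i hh)
      have h2 : ∀ᶠ t : ℝ in nhds 0, x + t • h ∈ coneGen v j :=
        evA hxj (span_le_vectorSpan hsum j hh)
      obtain ⟨t, ⟨hti, htj⟩, ht0⟩ :=
        (((h1.and h2).filter_mono nhdsWithin_le_nhds).and
          (eventually_mem_nhdsWithin (s := {(0:ℝ)}ᶜ))).exists
      have hmemW : x + t • h ∈ W := hsubW ⟨hti, htj⟩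
      have hth : t • h ∈ W := by
        have := W.sub_mem hmemW hxW; simpa using this
      have ht0' : t ≠ 0 := ht0
      have := W.smul_mem t⁻¹ hth
      rwa [smul_smul, inv_mul_cancel₀ ht0', one_smul] at this
    have hvj : v j ∈ W := hHW (v j) (Submodule.subset_span ⟨j, rfl⟩)
    have himg : (fun k : {k : Fin (n+1) // k ≠ i} => v ↑k) ''
        {k : {k : Fin (n+1) // k ≠ i} | (k : Fin (n+1)) ≠ j} = v '' {k | k ≠ i ∧ k ≠ j} := by
      ext y
      constructor
      · rintro ⟨⟨k, hki⟩, hkj, rfl⟩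
        exact ⟨k, ⟨hki, hkj⟩, rfl⟩
      · rintro ⟨k, ⟨hki, hkj⟩, rfl⟩
        exact ⟨⟨k, hki⟩, hkj, rfl⟩
    have := (hind i).notMem_span_image
      (s := {k : {k : Fin (n+1) // k ≠ i} | (k : Fin (n+1)) ≠ j}) (x := ⟨j, Ne.symm hij⟩)
      (by simp)
    rw [himg] at this
    exact this hvj
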